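/- arXiv:2105.03511 — 7 statements merged into one kernel-verified Lean document; each statement's English description precedes it below -/
import Mathlib

section
/- Let n ≥ 2 and N be integers with 2 ≤ N ≤ n+1, and let z_1, …, z_N be points on the unit sphere S^{n-1} ⊂ ℝ^n. Then the sum of distances satisfies Σ_{i=1}^N Σ_{j=1}^N ‖z_i − z_j‖ ≤ N·√(2N(N−1)). -/
/-- Degree-1 universal upper bound on the sum of distances of a spherical code:
for `2 ≤ N ≤ n+1` points on the unit sphere `S^{n-1} ⊂ ℝ^n`,
`Σᵢ Σⱼ ‖zᵢ − zⱼ‖ ≤ N·√(2N(N−1))`. -/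
theorem sum_dist_le_tau1 (n N : ℕ) (hn : 2 ≤ n) (hN2 : 2 ≤ N) (hNn : N ≤ n + 1)
    (z : Fin N → EuclideanSpace ℝ (Fin n)) (hz : ∀ i, ‖z i‖ = 1) :
    ∑ i, ∑ j, ‖z i - z j‖ ≤ (N : ℝ) * Real.sqrt (2 * N * (N - 1)) := by
  have hN1 : (1:ℝ) ≤ (N:ℝ) := by exact_mod_cast (one_le_two.trans hN2)
  set S := ∑ i, ∑ j, ‖z i - z j‖ with hS
  have hSnn : 0 ≤ S := Finset.sum_nonneg fun i _ => Finset.sum_nonneg fun j _ => norm_nonneg _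
  -- sum of squared distances bound
  have hinner : ∑ i, ∑ j, (inner ℝ (z i) (z j) : ℝ) = inner ℝ (∑ i, z i) (∑ i, z i) := by
    rw [sum_inner]
    exact Finset.sum_congr rfl fun i _ => (inner_sum _ _ _).symm
  have hsq : ∑ i, ∑ j, ‖z i - z j‖ ^ 2 ≤ 2 * (N:ℝ) ^ 2 := by
    have h : ∀ i j : Fin N, ‖z i - z j‖ ^ 2 = 2 - 2 * (inner ℝ (z i) (z j) : ℝ) := by
      intro i j
      rw [norm_sub_sq_real, hz, hz]; ring
    have hpos : (0:ℝ) ≤ inner ℝ (∑ i, z i) (∑ i, z i) := real_inner_self_nonneg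
    calc ∑ i, ∑ j, ‖z i - z j‖ ^ 2
        = ∑ i, ∑ j, (2 - 2 * (inner ℝ (z i) (z j) : ℝ)) := by simp_rw [h]
      _ = 2 * (N:ℝ)^2 - 2 * ∑ i, ∑ j, (inner ℝ (z i) (z j) : ℝ) := by
          simp [Finset.sum_sub_distrib, Finset.mul_sum]; ring
      _ ≤ 2 * (N:ℝ)^2 := by rw [hinner]; linarith
  -- Cauchy-Schwarz
  have hcs : S ^ 2 ≤ ((N:ℝ)^2 - N) * ∑ i, ∑ j, ‖z i - z j‖ ^ 2 := by
    have := Finset.sum_mul_sq_le_sq_mul_sq (Finset.univ : Finset (Fin N × Fin N))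
      (fun p => if p.1 = p.2 then 0 else 1) (fun p => ‖z p.1 - z p.2‖)
    have h1 : ∑ p : Fin N × Fin N, (if p.1 = p.2 then (0:ℝ) else 1) * ‖z p.1 - z p.2‖ = S := by
      rw [hS, Fintype.sum_prod_type]
      refine Finset.sum_congr rfl fun i _ => Finset.sum_congr rfl fun j _ => ?_
      by_cases hp : i = j
      · simp [hp]
      · simp [hp]
    have h2 : ∑ p : Fin N × Fin N, (if p.1 = p.2 then (0:ℝ) else 1) ^ 2 = (N:ℝ)^2 - N := by
      have : ∀ p : Fin N × Fin N, (if p.1 = p.2 then (0:ℝ) else 1) ^ 2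
          = 1 - (if p.1 = p.2 then (1:ℝ) else 0) := by
        intro p; by_cases hp : p.1 = p.2 <;> simp [hp]
      simp_rw [this]
      rw [Fintype.sum_prod_type]
      simp [Finset.sum_sub_distrib, Finset.sum_ite_eq, Finset.card_univ]
      ring
    have h3 : ∑ p : Fin N × Fin N, ‖z p.1 - z p.2‖ ^ 2 = ∑ i, ∑ j, ‖z i - z j‖ ^ 2 :=
      Fintype.sum_prod_type _
    rw [h1, h2, h3] at this
    exact this
  have hfin : S ^ 2 ≤ ((N:ℝ) * Real.sqrt (2 * N * (N - 1))) ^ 2 := by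
    have harg : (0:ℝ) ≤ 2 * N * (N - 1) := by nlinarith
    rw [mul_pow, Real.sq_sqrt harg]
    calc S ^ 2 ≤ ((N:ℝ)^2 - N) * (2 * (N:ℝ)^2) := by
          refine hcs.trans ?_
          have : (0:ℝ) ≤ (N:ℝ)^2 - N := by nlinarith
          nlinarith [hsq]
      _ = (N:ℝ)^2 * (2 * N * (N - 1)) := by ring
  have hRnn : 0 ≤ (N : ℝ) * Real.sqrt (2 * N * (N - 1)) := by positivity
  nlinarith [hfin, hSnn, hRnn]
end

section
/- Let n ≥ 2 and N be integers with n+1 ≤ N ≤ 2n, and let z_1, …, z_N be points on the unit sphere S^{n-1} ⊂ ℝ^n. Then Σ_{i=1}^N Σ_{j=1}^N ‖z_i − z_j‖ ≤ N·(2N(N−n−1) + (N−2)·√(2nN(n−1)(N−2))) / (Nn + N − 4n). -/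
set_option maxHeartbeats 2000000 in
/-- Degree-2 universal upper bound on the sum of distances of a spherical code:
for `n+1 ≤ N ≤ 2n` points on the unit sphere `S^{n-1} ⊂ ℝ^n`,
`Σᵢ Σⱼ ‖zᵢ − zⱼ‖ ≤ N·(2N(N−n−1) + (N−2)·√(2nN(n−1)(N−2))) / (Nn + N − 4n)`. -/
theorem sum_dist_le_tau2 (n N : ℕ) (hn : 2 ≤ n) (hN1 : n + 1 ≤ N) (hN2 : N ≤ 2 * n)
    (z : Fin N → EuclideanSpace ℝ (Fin n)) (hz : ∀ i, ‖z i‖ = 1) :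
    ∑ i, ∑ j, ‖z i - z j‖ ≤
      (N : ℝ) * (2 * N * ((N : ℝ) - n - 1)
          + ((N : ℝ) - 2) * Real.sqrt (2 * n * N * ((n : ℝ) - 1) * ((N : ℝ) - 2)))
        / ((N : ℝ) * n + N - 4 * n) := by
  classical
  have hx2 : (2:ℝ) ≤ (n:ℝ) := by exact_mod_cast hn
  have hy1 : (n:ℝ) + 1 ≤ (N:ℝ) := by exact_mod_cast (by exact_mod_cast hN1 : (n:ℝ) + 1 ≤ (N:ℝ))
  have hy2 : (N:ℝ) ≤ 2 * (n:ℝ) := by exact_mod_cast hN2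
  have hxpos : (0:ℝ) < (n:ℝ) := by linarith
  have hy3 : (3:ℝ) ≤ (N:ℝ) := by linarith
  have hden : (0:ℝ) < (N:ℝ) * n + N - 4 * n := by nlinarith
  have harg : (0:ℝ) < 2 * (N:ℝ) * ((n:ℝ) - 1) / ((n:ℝ) * ((N:ℝ) - 2)) := by
    apply div_pos <;> nlinarith
  set u : ℝ := Real.sqrt (2 * (N:ℝ) * ((n:ℝ) - 1) / ((n:ℝ) * ((N:ℝ) - 2))) with hu_def
  have hu0 : 0 < u := Real.sqrt_pos.mpr harg
  have hne : ((n:ℝ) * ((N:ℝ) - 2)) ≠ 0 := ne_of_gt (by nlinarith)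
  have hu2 : (n:ℝ) * ((N:ℝ) - 2) * u ^ 2 = 2 * (N:ℝ) * ((n:ℝ) - 1) := by
    rw [hu_def, Real.sq_sqrt harg.le, ← mul_div_assoc, mul_div_cancel_left₀ _ hne]
  have hR : Real.sqrt (2 * (n:ℝ) * (N:ℝ) * ((n:ℝ) - 1) * ((N:ℝ) - 2))
      = (n:ℝ) * ((N:ℝ) - 2) * u := by
    rw [show 2 * (n:ℝ) * (N:ℝ) * ((n:ℝ) - 1) * ((N:ℝ) - 2)
        = ((n:ℝ) * ((N:ℝ) - 2)) ^ 2 * (2 * (N:ℝ) * ((n:ℝ) - 1) / ((n:ℝ) * ((N:ℝ) - 2))) by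
      field_simp]
    rw [Real.sqrt_mul (sq_nonneg _), Real.sqrt_sq (by nlinarith : (0:ℝ) ≤ (n:ℝ) * ((N:ℝ) - 2))]
  set t : Fin N → Fin N → ℝ := fun i j => (inner ℝ (z i) (z j) : ℝ) with ht_def
  have htii : ∀ i, t i i = 1 := by
    intro i
    simp only [ht_def, real_inner_self_eq_norm_sq, hz i, one_pow]
  have hdt : ∀ i j, ‖z i - z j‖ ^ 2 = 2 - 2 * t i j := by
    intro i j
    rw [ht_def]
    have h := norm_sub_sq_real (z i) (z j)
    rw [hz i, hz j] at h
    simp only [one_pow] at h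
    simp only [ht_def]
    linarith
  have hd2 : ∀ i j, ‖z i - z j‖ ≤ 2 := by
    intro i j
    calc ‖z i - z j‖ ≤ ‖z i‖ + ‖z j‖ := norm_sub_le _ _
    _ = 2 := by rw [hz i, hz j]; norm_num
  -- pointwise certificate
  have pt : ∀ i j, (u * (u + 2) ^ 2 / 2) * ‖z i - z j‖ ≤
      (u ^ 3 + 5/2 * u ^ 2 + 2 * u + 1) + (-(u * (4 + 3 * u)) / 2) * t i j - (t i j) ^ 2
        - (if i = j then u ^ 2 * (1 + u) else 0) := by
    intro i j
    rcases eq_or_ne i j with h | h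
    · subst h
      rw [if_pos rfl, htii i, sub_self, norm_zero, mul_zero]
      have h0 : (u ^ 3 + 5/2 * u ^ 2 + 2 * u + 1) + (-(u * (4 + 3 * u)) / 2) * 1 - 1 ^ 2
          - u ^ 2 * (1 + u) = 0 := by ring
      linarith
    · rw [if_neg h]
      have ht1 : t i j = 1 - ‖z i - z j‖ ^ 2 / 2 := by linarith [hdt i j]
      rw [ht1]
      set d := ‖z i - z j‖ with hd_def
      have hd0 : 0 ≤ d := norm_nonneg _
      have hdle : d ≤ 2 := hd2 i j
      have hint : 0 ≤ (d - u) ^ 2 * ((2 - d) * (d + 2 + 2 * u)) := by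
        apply mul_nonneg (sq_nonneg _)
        apply mul_nonneg <;> linarith
      nlinarith [hint]
  -- summation of the certificate
  have hsum : (u * (u + 2) ^ 2 / 2) * (∑ i, ∑ j, ‖z i - z j‖) ≤
      (u ^ 3 + 5/2 * u ^ 2 + 2 * u + 1) * (N:ℝ) ^ 2
        + (-(u * (4 + 3 * u)) / 2) * (∑ i, ∑ j, t i j)
        - (∑ i, ∑ j, (t i j) ^ 2) - (N:ℝ) * (u ^ 2 * (1 + u)) := by
    have h := Finset.sum_le_sum (s := Finset.univ)
      (fun i _ => Finset.sum_le_sum (s := Finset.univ) (fun j _ => pt i j))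
    calc (u * (u + 2) ^ 2 / 2) * (∑ i, ∑ j, ‖z i - z j‖)
        = ∑ i, ∑ j, (u * (u + 2) ^ 2 / 2) * ‖z i - z j‖ := by
          rw [Finset.mul_sum]; exact Finset.sum_congr rfl fun i _ => Finset.mul_sum _ _ _
      _ ≤ ∑ i, ∑ j, ((u ^ 3 + 5/2 * u ^ 2 + 2 * u + 1)
            + (-(u * (4 + 3 * u)) / 2) * t i j - (t i j) ^ 2
            - (if i = j then u ^ 2 * (1 + u) else 0)) := h
      _ = (u ^ 3 + 5/2 * u ^ 2 + 2 * u + 1) * (N:ℝ) ^ 2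
            + (-(u * (4 + 3 * u)) / 2) * (∑ i, ∑ j, t i j)
            - (∑ i, ∑ j, (t i j) ^ 2) - (N:ℝ) * (u ^ 2 * (1 + u)) := by
          simp only [Finset.sum_sub_distrib, Finset.sum_add_distrib, Finset.sum_const,
            Finset.card_univ, Fintype.card_fin, nsmul_eq_mul, Finset.sum_ite_eq,
            Finset.mem_univ, if_true, ← Finset.mul_sum]
          ring
  -- first moment nonneg
  have hT1 : 0 ≤ ∑ i, ∑ j, t i j := by
    have h : (∑ i, ∑ j, t i j) = (inner ℝ (∑ i, z i) (∑ j, z j) : ℝ) := by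
      rw [sum_inner]
      exact Finset.sum_congr rfl fun i _ => (inner_sum _ _ _).symm
    rw [h]
    exact real_inner_self_nonneg
  -- second moment lower bound
  have hT2 : (N:ℝ) ^ 2 ≤ (n:ℝ) * ∑ i, ∑ j, (t i j) ^ 2 := by
    have hip : ∀ i j, t i j = ∑ k, z i k * z j k := by
      intro i j
      simp [ht_def, PiLp.inner_apply, RCLike.inner_apply, conj_trivial, mul_comm]
    set M : Fin n → Fin n → ℝ := fun k l => ∑ i, z i k * z i l with hM
    have htr : ∑ k, M k k = (N:ℝ) := by
      simp only [hM]
      rw [Finset.sum_comm]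
      have : ∀ i : Fin N, ∑ k, z i k * z i k = 1 := by
        intro i
        rw [← hip i i, htii i]
      rw [Finset.sum_congr rfl fun i _ => this i]
      simp
    have hswap : ∑ i, ∑ j, (t i j) ^ 2 = ∑ k, ∑ l, (M k l) ^ 2 := by
      simp only [hip, hM, sq, Finset.sum_mul_sum]
      calc ∑ i, ∑ j, ∑ k, ∑ l, (z i k * z j k) * (z i l * z j l)
          = ∑ i, ∑ k, ∑ j, ∑ l, (z i k * z j k) * (z i l * z j l) :=
            Finset.sum_congr rfl fun i _ => Finset.sum_comm
        _ = ∑ k, ∑ i, ∑ j, ∑ l, (z i k * z j k) * (z i l * z j l) := Finset.sum_comm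
        _ = ∑ k, ∑ i, ∑ l, ∑ j, (z i k * z j k) * (z i l * z j l) :=
            Finset.sum_congr rfl fun k _ => Finset.sum_congr rfl fun i _ => Finset.sum_comm
        _ = ∑ k, ∑ l, ∑ i, ∑ j, (z i k * z j k) * (z i l * z j l) :=
            Finset.sum_congr rfl fun k _ => Finset.sum_comm
        _ = ∑ k, ∑ l, ∑ i, ∑ j, (z i k * z i l) * (z j k * z j l) :=
            Finset.sum_congr rfl fun k _ => Finset.sum_congr rfl fun l _ =>
              Finset.sum_congr rfl fun i _ => Finset.sum_congr rfl fun j _ => by ring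
    have hcs : (∑ k, M k k) ^ 2 ≤ (n:ℝ) * ∑ k, (M k k) ^ 2 := by
      have := sq_sum_le_card_mul_sum_sq (s := (Finset.univ : Finset (Fin n)))
        (f := fun k => M k k)
      simpa using this
    have hdiag : ∑ k, (M k k) ^ 2 ≤ ∑ k, ∑ l, (M k l) ^ 2 :=
      Finset.sum_le_sum fun k _ =>
        Finset.single_le_sum (f := fun l => (M k l) ^ 2) (fun l _ => sq_nonneg _)
          (Finset.mem_univ k)
    rw [hswap]
    rw [htr] at hcs
    nlinarith [hdiag]
  -- combine into a division-free bound
  have hB : -(u * (4 + 3 * u)) / 2 ≤ 0 := by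
    have h4 : 0 ≤ u * (4 + 3 * u) := mul_nonneg hu0.le (by linarith)
    linarith
  set S := ∑ i, ∑ j, ‖z i - z j‖ with hS_def
  set T1 := ∑ i, ∑ j, t i j with hT1_def
  set T2 := ∑ i, ∑ j, (t i j) ^ 2 with hT2_def
  have h1' : (n:ℝ) * (u * (u + 2) ^ 2 / 2) * S ≤
      (u ^ 3 + 5/2 * u ^ 2 + 2 * u + 1) * (n:ℝ) * (N:ℝ) ^ 2 - (N:ℝ) ^ 2
        - (n:ℝ) * (N:ℝ) * (u ^ 2 * (1 + u)) := by
    have h := mul_le_mul_of_nonneg_left hsum hxpos.le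
    have hBT : 0 ≤ (n:ℝ) * ((u * (4 + 3 * u)) / 2) * T1 := by
      apply mul_nonneg (mul_nonneg hxpos.le (by positivity)) hT1
    have hexp : (n:ℝ) * ((u ^ 3 + 5/2 * u ^ 2 + 2 * u + 1) * (N:ℝ) ^ 2
        + (-(u * (4 + 3 * u)) / 2) * T1 - T2 - (N:ℝ) * (u ^ 2 * (1 + u)))
        = (u ^ 3 + 5/2 * u ^ 2 + 2 * u + 1) * (n:ℝ) * (N:ℝ) ^ 2
          - (n:ℝ) * ((u * (4 + 3 * u)) / 2) * T1 - (n:ℝ) * T2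
          - (n:ℝ) * (N:ℝ) * (u ^ 2 * (1 + u)) := by ring
    rw [hexp] at h
    linarith [h, hBT, hT2]
  -- final algebra
  rw [hR, le_div_iff₀ hden]
  have hfac : (0:ℝ) < 2 * (u * (u + 2) ^ 2 / 2) * (n:ℝ) := by positivity
  apply le_of_mul_le_mul_left _ hfac
  calc (2 * (u * (u + 2) ^ 2 / 2) * (n:ℝ)) * (S * ((N:ℝ) * n + N - 4 * n))
      = (2 * ((N:ℝ) * n + N - 4 * n)) * ((n:ℝ) * (u * (u + 2) ^ 2 / 2) * S) := by
        ring
    _ ≤ (2 * ((N:ℝ) * n + N - 4 * n)) * ((u ^ 3 + 5/2 * u ^ 2 + 2 * u + 1) * (n:ℝ) * (N:ℝ) ^ 2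
          - (N:ℝ) ^ 2 - (n:ℝ) * (N:ℝ) * (u ^ 2 * (1 + u))) := by
        apply mul_le_mul_of_nonneg_left h1'
        linarith
    _ = (2 * (u * (u + 2) ^ 2 / 2) * (n:ℝ)) * ((N:ℝ) * (2 * N * ((N : ℝ) - n - 1)
          + ((N : ℝ) - 2) * ((n:ℝ) * ((N:ℝ) - 2) * u))) := by
        linear_combination (-(N:ℝ) * ((N:ℝ) + (n:ℝ) * N - 4 * n
          + (n:ℝ) * ((N:ℝ) - 2) * u * (u + 2))) * hu2
end

section
/- Let n ≥ 2 and N be integers with n+1 ≤ N ≤ 2n, let s be a real number with (N−2n)/(n(N−2)) ≤ s ≤ 0, and let z_1, …, z_N be points on the unit sphere S^{n-1} ⊂ ℝ^n such that ⟨z_i, z_j⟩ ≤ s for all i ≠ j. Then Σ_{i=1}^N Σ_{j=1}^N ‖z_i − z_j‖ ≥ N·(2N(1−ns²) − 2n(1−s²) + (n−1)N·√(2(1−s))) / (n(1−s²)). -/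
open scoped RealInnerProductSpace

lemma ptwise (s t : ℝ) (hs1 : -1 < s) (hs2 : s ≤ 0) (ht1 : -1 ≤ t) (ht2 : t ≤ s) :
    Real.sqrt (2-2*s) + (2 - Real.sqrt (2-2*s))/(1-s^2) * (t^2 - s^2) ≤ Real.sqrt (2-2*t) := by
  set q := Real.sqrt (2-2*s) with hq
  have hq0 : 0 ≤ q := Real.sqrt_nonneg _
  have hq_sq : q^2 = 2-2*s := Real.sq_sqrt (by linarith)
  have hq2 : q ≤ 2 := by nlinarith
  have hd : 0 < 1 - s^2 := by nlinarith
  have he0 : 0 ≤ t^2 - s^2 := by nlinarith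
  have he1 : t^2 - s^2 ≤ 1 - s^2 := by nlinarith
  have hlin : (1+s)*(t^2-s^2) ≤ (s-t)*(1-s^2) := by
    nlinarith [mul_nonneg (sub_nonneg.2 ht2) (by linarith : (0:ℝ) ≤ t+1)]
  have hL0 : 0 ≤ q + (2-q)/(1-s^2) * (t^2-s^2) :=
    add_nonneg hq0 (mul_nonneg (div_nonneg (by linarith) hd.le) he0)
  rw [← Real.sqrt_sq hL0]
  apply Real.sqrt_le_sqrt
  have key : (q*(1-s^2) + (2-q)*(t^2-s^2))^2 ≤ (2-2*t)*((1-s^2)^2) := by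
    nlinarith [mul_nonneg (sq_nonneg (2-q)) (mul_nonneg he0 (by linarith : (0:ℝ) ≤ (1-s^2)-(t^2-s^2))),
      mul_nonneg hd.le (by linarith : (0:ℝ) ≤ (s-t)*(1-s^2) - (1+s)*(t^2-s^2))]
  have heq : (q + (2-q)/(1-s^2) * (t^2-s^2))^2
      = (q*(1-s^2) + (2-q)*(t^2-s^2))^2 / ((1-s^2)^2) := by
    field_simp
  rw [heq, div_le_iff₀ (by positivity)]
  exact key


lemma sum_inner_sq_ge (n N : ℕ) (hn : 0 < n) (z : Fin N → EuclideanSpace ℝ (Fin n))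
    (hz : ∀ i, ‖z i‖ = 1) :
    ((N:ℝ))^2 / n ≤ ∑ i, ∑ j, ⟪z i, z j⟫^2 := by
  have hinner : ∀ x y : EuclideanSpace ℝ (Fin n), ⟪x, y⟫ = ∑ k, x k * y k := by
    intro x y
    simp [PiLp.inner_apply, RCLike.inner_apply, mul_comm]
  set A : Fin n → Fin n → ℝ := fun k l => ∑ i, z i k * z i l with hA
  have htrace : ∑ k, A k k = (N:ℝ) := by
    have h1 : ∀ i, ∑ k, z i k * z i k = 1 := by
      intro i
      have := hinner (z i) (z i)
      rw [real_inner_self_eq_norm_sq, hz i] at this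
      simpa using this.symm
    rw [hA, Finset.sum_comm]
    simp [h1]
  have hswap : ∑ i, ∑ j, ⟪z i, z j⟫^2 = ∑ k, ∑ l, (A k l)^2 := by
    have e1 : ∑ i, ∑ j, ⟪z i, z j⟫^2
        = ∑ p : Fin N × Fin N, ∑ q : Fin n × Fin n,
            (z p.1 q.1 * z p.1 q.2) * (z p.2 q.1 * z p.2 q.2) := by
      rw [Fintype.sum_prod_type]
      apply Finset.sum_congr rfl; intro i _
      apply Finset.sum_congr rfl; intro j _
      rw [Fintype.sum_prod_type, hinner, sq, Finset.sum_mul_sum]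
      apply Finset.sum_congr rfl; intro k _
      apply Finset.sum_congr rfl; intro l _
      ring
    have e2 : ∑ k, ∑ l, (A k l)^2
        = ∑ q : Fin n × Fin n, ∑ p : Fin N × Fin N,
            (z p.1 q.1 * z p.1 q.2) * (z p.2 q.1 * z p.2 q.2) := by
      rw [Fintype.sum_prod_type]
      apply Finset.sum_congr rfl; intro k _
      apply Finset.sum_congr rfl; intro l _
      rw [Fintype.sum_prod_type, hA, sq, Finset.sum_mul_sum]
    rw [e1, e2, Finset.sum_comm]
  have hCS : ((N:ℝ))^2 ≤ (n:ℝ) * ∑ k, (A k k)^2 := by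
    have := sq_sum_le_card_mul_sum_sq (s := (Finset.univ : Finset (Fin n))) (f := fun k => A k k)
    simpa [htrace] using this
  have hdiag : ∑ k, (A k k)^2 ≤ ∑ k, ∑ l, (A k l)^2 := by
    apply Finset.sum_le_sum
    intro k _
    exact Finset.single_le_sum (f := fun l => A k l ^ 2) (fun l _ => sq_nonneg _) (Finset.mem_univ k)
  rw [hswap, div_le_iff₀ (by positivity)]
  calc ((N:ℝ))^2 ≤ (n:ℝ) * ∑ k, (A k k)^2 := hCS
    _ ≤ (n:ℝ) * ∑ k, ∑ l, (A k l)^2 := by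
        apply mul_le_mul_of_nonneg_left hdiag (by positivity)
    _ = (∑ k, ∑ l, (A k l)^2) * n := by ring

/-- Degree-2 universal lower bound: for `n+1 ≤ N ≤ 2n` points on the unit sphere
with pairwise inner products at most `s ∈ [(N−2n)/(n(N−2)), 0]`,
`Σᵢ Σⱼ ‖zᵢ − zⱼ‖ ≥ N·(2N(1−ns²) − 2n(1−s²) + (n−1)N·√(2(1−s))) / (n(1−s²))`. -/
theorem sum_dist_ge_tau2 (n N : ℕ) (hn : 2 ≤ n) (hN1 : n + 1 ≤ N) (hN2 : N ≤ 2 * n)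
    (s : ℝ) (hs1 : ((N : ℝ) - 2 * n) / ((n : ℝ) * ((N : ℝ) - 2)) ≤ s) (hs2 : s ≤ 0)
    (z : Fin N → EuclideanSpace ℝ (Fin n)) (hz : ∀ i, ‖z i‖ = 1)
    (hsep : ∀ i j, i ≠ j → ⟪z i, z j⟫ ≤ s) :
    (N : ℝ) * (2 * N * (1 - n * s ^ 2) - 2 * n * (1 - s ^ 2)
        + ((n : ℝ) - 1) * N * Real.sqrt (2 * (1 - s)))
      / ((n : ℝ) * (1 - s ^ 2)) ≤ ∑ i, ∑ j, ‖z i - z j‖ := by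
  have hn' : (2:ℝ) ≤ (n:ℝ) := by exact_mod_cast hn
  have hN1' : (n:ℝ) + 1 ≤ (N:ℝ) := by exact_mod_cast hN1
  have hN2' : (N:ℝ) ≤ 2 * (n:ℝ) := by exact_mod_cast hN2
  have hsm1 : -1 < s := by
    have hden : 0 < (n:ℝ) * ((N:ℝ) - 2) := by nlinarith
    have h1 : (-1:ℝ) < ((N : ℝ) - 2 * n) / ((n : ℝ) * ((N : ℝ) - 2)) := by
      rw [lt_div_iff₀ hden]
      nlinarith [sq_nonneg ((n:ℝ) - 1)]
    linarith
  have hd : 0 < 1 - s^2 := by nlinarith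
  set q := Real.sqrt (2 - 2*s) with hq_def
  have hq0 : 0 ≤ q := Real.sqrt_nonneg _
  have hq_sq : q^2 = 2 - 2*s := Real.sq_sqrt (by linarith)
  have hq2 : q ≤ 2 := by nlinarith
  set C := (2 - q)/(1 - s^2) with hC_def
  set A := q - C * s^2 with hA_def
  have hC0 : 0 ≤ C := div_nonneg (by linarith) hd.le
  have hAC : A + C = 2 := by
    rw [hA_def, hC_def]
    field_simp
    ring
  -- pointwise bound
  have key : ∀ i j, (A + C * ⟪z i, z j⟫^2) - (if i = j then (2:ℝ) else 0) ≤ ‖z i - z j‖ := by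
    intro i j
    by_cases h : i = j
    · subst h
      rw [if_pos rfl, real_inner_self_eq_norm_sq, hz i]
      simp only [one_pow, mul_one, sub_self, norm_zero]
      linarith [hAC]
    · rw [if_neg h, sub_zero]
      set t := ⟪z i, z j⟫ with ht_def
      have ht2 : t ≤ s := hsep i j h
      have ht1 : -1 ≤ t := by
        have h1 := abs_real_inner_le_norm (z i) (z j)
        rw [hz i, hz j, mul_one, ← ht_def] at h1
        have h2 := neg_abs_le t
        have h3 := neg_le_neg (le_of_abs_le h1)
        linarith [abs_nonneg t, neg_abs_le t, h1]
      have hnorm : ‖z i - z j‖ = Real.sqrt (2 - 2*t) := by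
        have h2 : ‖z i - z j‖^2 = 2 - 2*t := by
          rw [norm_sub_sq_real, hz i, hz j, ht_def]
          ring
        rw [← Real.sqrt_sq (norm_nonneg (z i - z j)), h2]
      rw [hnorm]
      have hptw := ptwise s t hsm1 hs2 ht1 ht2
      rw [← hq_def, ← hC_def] at hptw
      calc A + C * t^2 = q + C * (t^2 - s^2) := by rw [hA_def]; ring
        _ ≤ Real.sqrt (2 - 2*t) := hptw
  -- sum up
  have hsum : ∑ i, ∑ j, ((A + C * ⟪z i, z j⟫^2) - (if i = j then (2:ℝ) else 0))
      ≤ ∑ i, ∑ j, ‖z i - z j‖ :=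
    Finset.sum_le_sum fun i _ => Finset.sum_le_sum fun j _ => key i j
  have hLHS : ∑ i, ∑ j, ((A + C * ⟪z i, z j⟫^2) - (if i = j then (2:ℝ) else 0))
      = (N:ℝ)^2 * A + C * (∑ i, ∑ j, ⟪z i, z j⟫^2) - 2*N := by
    simp only [Finset.sum_sub_distrib, Finset.sum_add_distrib, Finset.sum_const,
      Finset.card_univ, Fintype.card_fin, nsmul_eq_mul, Finset.sum_ite_eq,
      Finset.mem_univ, if_true, ← Finset.mul_sum]
    ring
  have hS := sum_inner_sq_ge n N (by omega) z hz
  have hfinal : (N : ℝ) * (2 * N * (1 - n * s ^ 2) - 2 * n * (1 - s ^ 2)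
        + ((n : ℝ) - 1) * N * Real.sqrt (2 * (1 - s)))
      / ((n : ℝ) * (1 - s ^ 2)) = (N:ℝ)^2 * A + C * ((N:ℝ)^2 / n) - 2*N := by
    rw [show (2 * (1 - s)) = 2 - 2*s by ring, ← hq_def, hA_def, hC_def]
    have hn0 : (n:ℝ) ≠ 0 := by positivity
    field_simp
    ring
  rw [hfinal]
  calc (N:ℝ)^2 * A + C * ((N:ℝ)^2 / n) - 2*N
      ≤ (N:ℝ)^2 * A + C * (∑ i, ∑ j, ⟪z i, z j⟫^2) - 2*N := by
        have := mul_le_mul_of_nonneg_left hS hC0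
        linarith
    _ ≤ ∑ i, ∑ j, ‖z i - z j‖ := by rw [← hLHS]; exact hsum
end

section
/- Let G be a strongly regular graph with parameters (v, k, a, c) on vertex set {1, …, v}, with 1 ≤ c, 0 < k < v−1. Let A be its adjacency matrix over ℝ, let θ be a real eigenvalue of A with θ ≠ k, let P be the orthogonal projection of ℝ^v onto the eigenspace of A for the eigenvalue θ, and for each vertex x let z_x = P e_x / ‖P e_x‖ be the normalized projection of the standard basis vector e_x (these projections are nonzero). Then Σ_{x=1}^v Σ_{y=1}^v ‖z_x − z_y‖ = v·( √(2k(k−θ)) + √(2(v−1−k)(v+θ−k)) ). -/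
open Matrix SimpleGraph Finset

private lemma mexpand {n : ℕ} (M : Matrix (Fin n) (Fin n) ℝ) (α β : ℝ) :
    (M - α • 1) * (M - β • 1) = M * M - (α + β) • M + (α * β) • 1 := by
  simp only [sub_mul, mul_sub, Matrix.smul_mul, Matrix.mul_smul, one_mul, mul_one, smul_smul]
  module

set_option maxHeartbeats 4000000 in
private theorem srg_aux (v k a c : ℕ) (hc : 1 ≤ c) (hk0 : 0 < k) (hkv : k < v - 1)
    (G : SimpleGraph (Fin v)) [DecidableRel G.Adj] (hG : G.IsSRGWith v k a c)
    (θ : ℝ) (hθk : θ ≠ (k : ℝ))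
    (hθ : Module.End.HasEigenvalue (Matrix.toEuclideanLin (G.adjMatrix ℝ)) θ)
    (hnz : ∀ x : Fin v,
      ((Submodule.orthogonalProjection
          (Module.End.eigenspace (Matrix.toEuclideanLin (G.adjMatrix ℝ)) θ)
          (EuclideanSpace.single x 1) : EuclideanSpace ℝ (Fin v))) ≠ 0)
    (z : Fin v → EuclideanSpace ℝ (Fin v))
    (hz : ∀ x : Fin v, z x =
      ‖((Submodule.orthogonalProjection
          (Module.End.eigenspace (Matrix.toEuclideanLin (G.adjMatrix ℝ)) θ)
          (EuclideanSpace.single x 1) : EuclideanSpace ℝ (Fin v)))‖⁻¹ •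
        ((Submodule.orthogonalProjection
          (Module.End.eigenspace (Matrix.toEuclideanLin (G.adjMatrix ℝ)) θ)
          (EuclideanSpace.single x 1) : EuclideanSpace ℝ (Fin v)))) :
    ∑ x, ∑ y, ‖z x - z y‖ =
      (v : ℝ) * (Real.sqrt (2 * k * ((k : ℝ) - θ))
        + Real.sqrt (2 * ((v : ℝ) - 1 - k) * ((v : ℝ) + θ - k))) := by
  classical
  have hvk : k + 1 < v := by omega
  have x0 : Fin v := ⟨0, by omega⟩
  set M : Matrix (Fin v) (Fin v) ℝ := G.adjMatrix ℝ with hMdef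
  set W := Module.End.eigenspace (Matrix.toEuclideanLin M) θ with hWdef
  set p : Fin v → EuclideanSpace ℝ (Fin v) :=
    fun x => (Submodule.orthogonalProjection W (EuclideanSpace.single x 1) : EuclideanSpace ℝ (Fin v))
    with hpdef
  -- basic cast facts
  have hk1 : (1:ℝ) ≤ (k:ℝ) := by exact_mod_cast hk0
  have hc1 : (1:ℝ) ≤ (c:ℝ) := by exact_mod_cast hc
  have hvR : (k:ℝ) + 2 ≤ (v:ℝ) := by exact_mod_cast hvk
  -- row sums of M
  have hrow : ∀ x : Fin v, ∑ y, M x y = (k:ℝ) := by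
    intro x
    simp only [hMdef, adjMatrix_apply]
    rw [Finset.sum_boole]
    simp [← SimpleGraph.neighborFinset_eq_filter, hG.regular x]
  have hMsymm : ∀ i j, M i j = M j i := by
    intro i j; simp [hMdef, adjMatrix_apply, SimpleGraph.adj_comm]
  have hcol : ∀ j : Fin v, ∑ i, M i j = (k:ℝ) := by
    intro j
    rw [show ∑ i, M i j = ∑ i, M j i from Finset.sum_congr rfl fun i _ => hMsymm i j]
    exact hrow j
  -- membership in the eigenspace as a mulVec condition
  have hmem : ∀ u : EuclideanSpace ℝ (Fin v), u ∈ W ↔ M *ᵥ ⇑u = θ • ⇑u := by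
    intro u
    rw [hWdef, Module.End.mem_eigenspace_iff]
    constructor
    · intro h; funext i; exact congrArg (fun w : EuclideanSpace ℝ (Fin v) => w i) h
    · intro h; ext i; exact congrFun h i
  -- eigenvectors sum to zero
  have hsum0 : ∀ u : EuclideanSpace ℝ (Fin v), u ∈ W → ∑ i, u i = 0 := by
    intro u hu
    have hMu := (hmem u).1 hu
    have h1 : ∑ i, (M *ᵥ ⇑u) i = θ * ∑ i, u i := by
      rw [hMu]; simp [Finset.mul_sum]
    have h2 : ∑ i, (M *ᵥ ⇑u) i = (k:ℝ) * ∑ i, u i := by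
      simp only [Matrix.mulVec, dotProduct]
      rw [Finset.sum_comm]
      rw [Finset.mul_sum]
      refine Finset.sum_congr rfl fun j _ => ?_
      rw [← Finset.sum_mul, hcol j]
    have h3 : (θ - (k:ℝ)) * ∑ i, u i = 0 := by rw [sub_mul]; rw [← h1, ← h2]; ring
    rcases mul_eq_zero.1 h3 with h | h
    · exact absurd (by linarith [sub_eq_zero.1 h] : θ = (k:ℝ)) hθk
    · exact h
  -- all-ones matrix and SRG identity
  set Jm : Matrix (Fin v) (Fin v) ℝ := Matrix.of (fun _ _ => (1:ℝ)) with hJmdef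
  have hcompl : Gᶜ.adjMatrix ℝ = Jm - 1 - M := by
    ext i j
    by_cases h : i = j
    · subst h; simp [hJmdef, hMdef]
    · by_cases ha : G.Adj i j <;>
        simp [compl_adj, h, ha, Matrix.one_apply, hJmdef, hMdef, Ne.symm]
  have hSRG : M * M = (k:ℝ) • 1 + (a:ℝ) • M + (c:ℝ) • (Jm - 1 - M) := by
    have h1 := hG.matrix_eq (α := ℝ)
    rw [pow_two] at h1
    rw [hMdef, h1, hcompl]
    simp [Nat.cast_smul_eq_nsmul, hMdef]
  -- the quadratic equation for θ
  have hquad : θ ^ 2 = ((a:ℝ) - c) * θ + ((k:ℝ) - c) := by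
    obtain ⟨u, hu⟩ := hθ.exists_hasEigenvector
    have huW : u ∈ W := hu.1
    have hMu := (hmem u).1 huW
    have hu0 : ∃ i, u i ≠ 0 := by
      by_contra h
      push_neg at h
      exact hu.2 (by ext i; simpa using h i)
    obtain ⟨i0, hi0⟩ := hu0
    have hsum := hsum0 u huW
    have happ := congrArg (fun N => (N *ᵥ ⇑u) i0) hSRG
    simp only [Matrix.add_mulVec, Matrix.sub_mulVec, Matrix.smul_mulVec,
      Matrix.one_mulVec, ← Matrix.mulVec_mulVec, hMu, Matrix.mulVec_smul,
      Pi.add_apply, Pi.sub_apply, Pi.smul_apply, smul_eq_mul] at happ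
    have hJu : (Jm *ᵥ ⇑u) i0 = 0 := by
      simp only [hJmdef, Matrix.mulVec, dotProduct, Matrix.of_apply, one_mul]
      exact hsum
    rw [hJu] at happ
    have hz0 : (θ ^ 2 - (((a:ℝ) - c) * θ + ((k:ℝ) - c))) * u i0 = 0 := by
      linear_combination happ
    rcases mul_eq_zero.1 hz0 with h | h
    · linarith [sub_eq_zero.1 h]
    · exact absurd h hi0
  set θ' : ℝ := (a:ℝ) - c - θ with hθ'def
  have hθ'sum : θ + θ' = (a:ℝ) - c := by rw [hθ'def]; ring
  have htt' : θ * θ' = (c:ℝ) - k := by rw [hθ'def]; linear_combination -hquad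
  -- combinatorial bounds : a < k and c ≤ k
  have hak : a < k := by
    have hdeg : 0 < G.degree x0 := by rw [hG.regular x0]; exact hk0
    obtain ⟨y0, hy0⟩ := (G.degree_pos_iff_exists_adj x0).1 hdeg
    have hcard := hG.of_adj x0 y0 hy0
    have hsub : (G.commonNeighbors x0 y0).toFinset ⊂ G.neighborFinset x0 := by
      constructor
      · intro zz hzz
        simp only [Set.mem_toFinset, mem_commonNeighbors] at hzz
        exact (mem_neighborFinset _ _ _).2 hzz.1
      · intro hdef
        have := hdef ((mem_neighborFinset _ _ _).2 hy0)
        simp only [Set.mem_toFinset, mem_commonNeighbors] at this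
        exact G.irrefl this.2
    have := Finset.card_lt_card hsub
    rw [Set.toFinset_card] at this
    rwa [hcard, card_neighborFinset_eq_degree, hG.regular x0] at this
  have hck : c ≤ k := by
    have hnon : ∃ y, y ≠ x0 ∧ ¬ G.Adj x0 y := by
      by_contra h
      push_neg at h
      have hsub : Finset.univ.erase x0 ⊆ G.neighborFinset x0 := by
        intro y hy
        exact (mem_neighborFinset _ _ _).2 (h y (Finset.mem_erase.1 hy).1)
      have := Finset.card_le_card hsub
      rw [Finset.card_erase_of_mem (Finset.mem_univ _), Finset.card_univ, Fintype.card_fin,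
        card_neighborFinset_eq_degree, hG.regular x0] at this
      omega
    obtain ⟨y1, hy1, hny1⟩ := hnon
    have hcard := hG.of_not_adj (Ne.symm hy1) hny1
    have hsub : (G.commonNeighbors x0 y1).toFinset ⊆ G.neighborFinset x0 := by
      intro zz hzz
      simp only [Set.mem_toFinset, mem_commonNeighbors] at hzz
      exact (mem_neighborFinset _ _ _).2 hzz.1
    have := Finset.card_le_card hsub
    rw [Set.toFinset_card] at this
    rwa [hcard, card_neighborFinset_eq_degree, hG.regular x0] at this
  have haR : (a:ℝ) ≤ (k:ℝ) - 1 := by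
    have : (a:ℝ) + 1 ≤ (k:ℝ) := by exact_mod_cast hak
    linarith
  have hcR : (c:ℝ) ≤ (k:ℝ) := by exact_mod_cast hck
  -- bounds on the eigenvalues
  have hpkc : ((k:ℝ) - c - θ) * ((k:ℝ) - c - θ') = ((k:ℝ) - c) * ((k:ℝ) - a - 1) := by
    linear_combination ((c:ℝ) - k) * hθ'sum + htt'
  have hθle : θ ≤ (k:ℝ) - c := by
    by_contra h
    push_neg at h
    have h1 : θ' < -1 := by linarith
    have h3 : ((k:ℝ) - c - θ) * ((k:ℝ) - c - θ') < 0 :=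
      mul_neg_of_neg_of_pos (by linarith) (by linarith)
    rw [hpkc] at h3
    have := mul_nonneg (by linarith : (0:ℝ) ≤ (k:ℝ) - c) (by linarith : (0:ℝ) ≤ (k:ℝ) - a - 1)
    linarith
  have hθ'le : θ' ≤ (k:ℝ) - c := by
    by_contra h
    push_neg at h
    have h1 : θ < -1 := by linarith
    have h3 : ((k:ℝ) - c - θ) * ((k:ℝ) - c - θ') < 0 :=
      mul_neg_of_pos_of_neg (by linarith) (by linarith)
    rw [hpkc] at h3
    have := mul_nonneg (by linarith : (0:ℝ) ≤ (k:ℝ) - c) (by linarith : (0:ℝ) ≤ (k:ℝ) - a - 1)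
    linarith
  have hθne' : θ ≠ θ' := by
    intro h
    have h1 : θ * θ = (c:ℝ) - k := by rw [← h] at htt'; linarith [htt']
    have h2 : (0:ℝ) ≤ (c:ℝ) - k := h1 ▸ mul_self_nonneg θ
    have h4 : θ * θ = 0 := by rw [h1]; linarith
    have h5 : θ = 0 := mul_self_eq_zero.1 h4
    rw [← h, h5] at hθ'sum
    linarith
  have haθ : (a:ℝ) = θ + θ' + c := by linarith
  -- the key matrix identities
  have hMJ : M * Jm = (k:ℝ) • Jm := by
    ext i j
    simp [Matrix.mul_apply, hJmdef, hrow i]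
  have hJmul : (M - θ • 1) * (M - θ' • 1) = (c:ℝ) • Jm := by
    rw [mexpand, hSRG, hθ'sum, htt', haθ]
    module
  have hcv : ((k:ℝ) - θ) * ((k:ℝ) - θ') = (c:ℝ) * v := by
    have hones : M *ᵥ (fun _ => (1:ℝ)) = fun _ => (k:ℝ) := by
      funext i
      simp [Matrix.mulVec, dotProduct, hrow i]
    have h1 : (M - θ' • 1) *ᵥ (fun _ => (1:ℝ)) = ((k:ℝ) - θ') • (fun _ => (1:ℝ)) := by
      rw [Matrix.sub_mulVec, Matrix.smul_mulVec, Matrix.one_mulVec, hones]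
      funext i
      simp only [Pi.sub_apply, Pi.smul_apply, smul_eq_mul]
      ring
    have h := congrArg (fun N => (N *ᵥ (fun _ => (1:ℝ))) x0) hJmul
    simp only [← Matrix.mulVec_mulVec, h1, Matrix.mulVec_smul, Matrix.sub_mulVec,
      Matrix.smul_mulVec, Matrix.one_mulVec, hones, Pi.sub_apply, Pi.smul_apply,
      smul_eq_mul] at h
    simp only [hJmdef, Matrix.mulVec, dotProduct, Matrix.of_apply, one_mul,
      Finset.sum_const, Finset.card_univ, Fintype.card_fin, nsmul_eq_mul] at h
    linear_combination h
  have hkθv : (k:ℝ) - θ ≤ (v:ℝ) := by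
    have h1 : (c:ℝ) ≤ (k:ℝ) - θ' := by linarith
    have h2 : (0:ℝ) < (k:ℝ) - θ := by linarith
    have h3 : ((k:ℝ) - θ) * c ≤ ((k:ℝ) - θ) * ((k:ℝ) - θ') :=
      mul_le_mul_of_nonneg_left h1 (le_of_lt h2)
    rw [hcv] at h3
    have h4 : (0:ℝ) < c := by linarith
    nlinarith [h3, h4, h2]
  have hcomm : (M - (k:ℝ) • 1) * (M - θ • 1) = (M - θ • 1) * (M - (k:ℝ) • 1) := by
    rw [mexpand, mexpand, add_comm θ ((k:ℝ)), mul_comm θ ((k:ℝ))]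
  have hcubic : (M - θ • 1) * ((M - (k:ℝ) • 1) * (M - θ' • 1)) = 0 := by
    rw [← Matrix.mul_assoc, ← hcomm, Matrix.mul_assoc, hJmul, Matrix.mul_smul,
      sub_mul, Matrix.smul_mul, one_mul, hMJ]
    simp
  set Nm : Matrix (Fin v) (Fin v) ℝ := (M - (k:ℝ) • 1) * (M - θ' • 1) with hNmdef
  set D : ℝ := (θ - k) * (θ - θ') with hDdef
  have hD0 : D ≠ 0 := mul_ne_zero (sub_ne_zero.2 hθk) (sub_ne_zero.2 hθne')
  set Emat : Matrix (Fin v) (Fin v) ℝ := D⁻¹ • Nm with hEdef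
  have hMN : M * Nm = θ • Nm := by
    have h1 : (M - θ • 1) * Nm = 0 := hcubic
    rw [sub_mul, Matrix.smul_mul, one_mul, sub_eq_zero] at h1
    exact h1
  have hMEmat : M * Emat = θ • Emat := by
    rw [hEdef, Matrix.mul_smul, hMN, smul_comm]
  -- Nm acts as D on the eigenspace
  have hNfix : ∀ u : EuclideanSpace ℝ (Fin v), u ∈ W → Nm *ᵥ ⇑u = D • ⇑u := by
    intro u hu
    have hMu := (hmem u).1 hu
    have h1 : (M - θ' • 1) *ᵥ ⇑u = (θ - θ') • ⇑u := by
      rw [Matrix.sub_mulVec, Matrix.smul_mulVec, Matrix.one_mulVec, hMu]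
      funext i
      simp only [Pi.sub_apply, Pi.smul_apply, smul_eq_mul]
      ring
    rw [hNmdef, ← Matrix.mulVec_mulVec, h1, Matrix.mulVec_smul, Matrix.sub_mulVec,
      Matrix.smul_mulVec, Matrix.one_mulVec, hMu]
    funext i
    simp only [Pi.sub_apply, Pi.smul_apply, smul_eq_mul, hDdef]
    ring
  have hEfix : ∀ u : EuclideanSpace ℝ (Fin v), u ∈ W → Emat *ᵥ ⇑u = ⇑u := by
    intro u hu
    rw [hEdef, Matrix.smul_mulVec, hNfix u hu, smul_smul, inv_mul_cancel₀ hD0, one_smul]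
  -- entries of Nm
  have hNmat : Nm = ((k:ℝ) + k * θ' - c) • 1 + (θ - k) • M + (c:ℝ) • Jm := by
    rw [hNmdef, mexpand, hSRG, haθ]
    module
  have hEntry : ∀ x y : Fin v, Nm x y =
      (if x = y then (k:ℝ) * (1 + θ') else if G.Adj x y then θ - k + c else c) := by
    intro x y
    rw [hNmat, hJmdef]
    by_cases h : x = y
    · subst h
      simp [Matrix.one_apply, hMdef]
      ring
    · by_cases hadj : G.Adj x y <;>
        simp [Matrix.one_apply, h, hadj, hMdef]
  have hNsymm : ∀ i j, Nm i j = Nm j i := by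
    intro i j
    rw [hEntry i j, hEntry j i]
    by_cases h : i = j
    · simp [h]
    · simp only [h, Ne.symm h, if_false]
      simp [SimpleGraph.adj_comm]
  have hEsymm : ∀ i j, Emat i j = Emat j i := by
    intro i j
    rw [hEdef]
    simp only [Matrix.smul_apply, smul_eq_mul]
    rw [hNsymm i j]
  have hcoordE : ∀ x i : Fin v,
      (Matrix.toEuclideanLin Emat (EuclideanSpace.single x (1:ℝ))) i = Emat i x := by
    intro x i
    show (Emat *ᵥ ⇑(EuclideanSpace.single x (1:ℝ))) i = _
    simp only [Matrix.mulVec, dotProduct]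
    rw [Finset.sum_eq_single x]
    · simp [EuclideanSpace.single_apply]
    · intro b _ hb
      simp [EuclideanSpace.single_apply, hb]
    · simp
  -- the image of a vector under Emat, as an element of EuclideanSpace
  have hmemE : ∀ x : Fin v,
      Matrix.toEuclideanLin Emat (EuclideanSpace.single x 1) ∈ W := by
    intro x
    rw [hmem]
    funext i
    show (M *ᵥ (Emat *ᵥ ⇑(EuclideanSpace.single x (1:ℝ)))) i = _
    rw [Matrix.mulVec_mulVec, hMEmat]
    simp [Matrix.smul_mulVec]
  have horth : ∀ (x : Fin v) (w : EuclideanSpace ℝ (Fin v)), w ∈ W →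
      inner (𝕜 := ℝ) (EuclideanSpace.single x 1
        - Matrix.toEuclideanLin Emat (EuclideanSpace.single x 1)) w = 0 := by
    intro x w hw
    rw [inner_sub_left, EuclideanSpace.inner_single_left]
    simp only [starRingEnd_apply, star_one, one_mul]
    have h2 : inner (𝕜 := ℝ) (Matrix.toEuclideanLin Emat (EuclideanSpace.single x (1:ℝ))) w
        = w x := by
      rw [PiLp.inner_apply]
      simp only [RCLike.inner_apply, starRingEnd_apply, star_trivial, hcoordE]
      rw [Finset.sum_congr rfl fun i _ => by rw [hEsymm i x]]
      have h3 := congrFun (hEfix w hw) x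
      simp only [Matrix.mulVec, dotProduct] at h3
      convert h3 using 2
      exact mul_comm _ _
    rw [h2, sub_self]
  have hproj : ∀ x : Fin v, p x = Matrix.toEuclideanLin Emat (EuclideanSpace.single x 1) := by
    intro x
    exact Submodule.eq_starProjection_of_mem_of_inner_eq_zero (hmemE x) (horth x)
  have hinner : ∀ x y : Fin v, inner (𝕜 := ℝ) (p x) (p y) = Emat x y := by
    intro x y
    rw [hproj x, hproj y]
    have h0 := horth x _ (hmemE y)
    rw [inner_sub_left, sub_eq_zero] at h0
    rw [← h0, EuclideanSpace.inner_single_left]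
    simp only [starRingEnd_apply, star_one, one_mul]
    rw [hcoordE y x, hEsymm x y]
  -- norms
  set ee : ℝ := D⁻¹ * ((k:ℝ) * (1 + θ')) with heedef
  have hnormsq : ∀ x : Fin v, ‖p x‖ ^ 2 = ee := by
    intro x
    rw [← real_inner_self_eq_norm_sq, hinner x x, hEdef]
    simp [hEntry x x, heedef]
  have heepos : 0 < ee := by
    rw [← hnormsq x0]
    exact pow_pos (norm_pos_iff.mpr (hnz x0)) 2
  have heeD : (k:ℝ) * (1 + θ') = ee * D := by
    rw [heedef]
    field_simp
  -- distances
  set s1 : ℝ := Real.sqrt (2 * ((k:ℝ) - θ) / k) with hs1def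
  set s2 : ℝ := Real.sqrt (2 * ((v:ℝ) + θ - k) / ((v:ℝ) - 1 - k)) with hs2def
  have hdist : ∀ x y : Fin v, ‖z x - z y‖ =
      (if x = y then 0 else if G.Adj x y then s1 else s2) := by
    have hk0R : (k:ℝ) ≠ 0 := by linarith
    have hv0R : (v:ℝ) - 1 - (k:ℝ) ≠ 0 := by linarith
    have hnr : ∀ x : Fin v, ‖p x‖ = Real.sqrt ee := by
      intro x
      rw [← Real.sqrt_sq (norm_nonneg (p x)), hnormsq x]
    have hznorm : ∀ x : Fin v, ‖z x‖ = 1 := by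
      intro x
      rw [hz x]
      exact norm_smul_inv_norm (hnz x)
    have hee : Real.sqrt ee * Real.sqrt ee = ee := Real.mul_self_sqrt heepos.le
    have hnrpos : (0:ℝ) < Real.sqrt ee := Real.sqrt_pos.2 heepos
    have hzinner : ∀ x y : Fin v, inner (𝕜 := ℝ) (z x) (z y) = Emat x y / ee := by
      intro x y
      rw [hz x, hz y, real_inner_smul_left, real_inner_smul_right, hinner x y, hnr, hnr]
      rw [eq_div_iff heepos.ne', ← hee]
      field_simp
      rw [Real.sqrt_sq hnrpos.le]
    have hsq : ∀ x y : Fin v, ‖z x - z y‖ ^ 2 = 2 - 2 * Emat x y / ee := by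
      intro x y
      rw [norm_sub_sq_real, hznorm, hznorm, hzinner]
      ring
    intro x y
    by_cases h : x = y
    · subst h
      simp
    · have hEval : Emat x y = D⁻¹ * (if G.Adj x y then θ - k + c else c) := by
        rw [hEdef]
        simp only [Matrix.smul_apply, smul_eq_mul]
        rw [hEntry x y, if_neg h]
      by_cases hadj : G.Adj x y
      · rw [if_neg h, if_pos hadj]
        rw [if_pos hadj] at hEval
        have hEadj : Emat x y = ee * (1 - ((k:ℝ) - θ)/k) := by
          rw [hEval, heedef]
          field_simp
          linear_combination (-1:ℝ) * htt'
        have h2 : ‖z x - z y‖ ^ 2 = 2 * ((k:ℝ) - θ) / k := by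
          rw [hsq x y, hEadj]
          field_simp
          ring
        rw [← Real.sqrt_sq (norm_nonneg (z x - z y)), h2, hs1def]
      · rw [if_neg h, if_neg hadj]
        rw [if_neg hadj] at hEval
        have hEnadj : Emat x y = ee * (1 - ((v:ℝ) + θ - k)/((v:ℝ) - 1 - k)) := by
          rw [hEval, heedef]
          field_simp
          linear_combination (-1:ℝ) * hcv + (1+(k:ℝ)) * htt'
        have h2 : ‖z x - z y‖ ^ 2 = 2 * ((v:ℝ) + θ - k) / ((v:ℝ) - 1 - k) := by
          rw [hsq x y, hEnadj]
          field_simp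
          ring
        rw [← Real.sqrt_sq (norm_nonneg (z x - z y)), h2, hs2def]
  -- counting per vertex
  have hcount : ∀ x : Fin v, ∑ y, ‖z x - z y‖ = (k:ℝ) * s1 + ((v:ℝ) - 1 - k) * s2 := by
    intro x
    have hsplit : ∀ y : Fin v, ‖z x - z y‖ =
        (if G.Adj x y then s1 else 0) + (if x ≠ y ∧ ¬ G.Adj x y then s2 else 0) := by
      intro y
      rw [hdist x y]
      by_cases h : x = y
      · subst h
        simp
      · by_cases hadj : G.Adj x y <;> simp [h, hadj]
    rw [Finset.sum_congr rfl fun y _ => hsplit y, Finset.sum_add_distrib]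
    have h1 : ∑ y, (if G.Adj x y then s1 else 0) = (k:ℝ) * s1 := by
      rw [← Finset.sum_filter, Finset.sum_const]
      have hfil : Finset.univ.filter (fun y => G.Adj x y) = G.neighborFinset x := by
        ext zz
        simp [mem_neighborFinset]
      rw [hfil, card_neighborFinset_eq_degree, hG.regular x, nsmul_eq_mul]
    have h2 : ∑ y, (if x ≠ y ∧ ¬ G.Adj x y then s2 else 0) = ((v:ℝ) - 1 - k) * s2 := by
      rw [← Finset.sum_filter, Finset.sum_const]
      have hfil : Finset.univ.filter (fun y => x ≠ y ∧ ¬ G.Adj x y) =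
          Finset.univ \ insert x (G.neighborFinset x) := by
        ext zz
        simp only [Finset.mem_filter, Finset.mem_univ, true_and, Finset.mem_sdiff,
          Finset.mem_insert, mem_neighborFinset, not_or]
        constructor
        · rintro ⟨h1', h2'⟩
          exact ⟨Ne.symm h1', h2'⟩
        · rintro ⟨h1', h2'⟩
          exact ⟨Ne.symm h1', h2'⟩
      rw [hfil, Finset.card_sdiff_of_subset (Finset.subset_univ _), Finset.card_univ, Fintype.card_fin,
        Finset.card_insert_of_notMem (by simp [mem_neighborFinset]),
        card_neighborFinset_eq_degree, hG.regular x, nsmul_eq_mul]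
      have hcast : ((v - (k + 1) : ℕ) : ℝ) = (v:ℝ) - 1 - k := by
        rw [Nat.cast_sub (le_of_lt hvk)]
        push_cast
        ring
      rw [hcast]
    rw [h1, h2]
  -- final algebra
  have hfin1 : (k:ℝ) * s1 = Real.sqrt (2 * k * ((k:ℝ) - θ)) := by
    have hk0R : (k:ℝ) ≠ 0 := by linarith
    have h1 : (k:ℝ) * s1 = Real.sqrt ((k:ℝ)^2 * (2 * ((k:ℝ) - θ) / k)) := by
      rw [Real.sqrt_mul (sq_nonneg _), Real.sqrt_sq (by linarith : (0:ℝ) ≤ (k:ℝ)), hs1def]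
    rw [h1]
    congr 1
    field_simp
  have hfin2 : ((v:ℝ) - 1 - k) * s2 = Real.sqrt (2 * ((v:ℝ) - 1 - k) * ((v:ℝ) + θ - k)) := by
    have hv0R : ((v:ℝ) - 1 - k) ≠ 0 := by linarith
    have h1 : ((v:ℝ) - 1 - k) * s2 =
        Real.sqrt (((v:ℝ) - 1 - k)^2 * (2 * ((v:ℝ) + θ - k) / ((v:ℝ) - 1 - k))) := by
      rw [Real.sqrt_mul (sq_nonneg _),
        Real.sqrt_sq (by linarith : (0:ℝ) ≤ (v:ℝ) - 1 - k), hs2def]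
    rw [h1]
    congr 1
    field_simp
  calc ∑ x, ∑ y, ‖z x - z y‖ = ∑ _x : Fin v, ((k:ℝ) * s1 + ((v:ℝ) - 1 - k) * s2) :=
        Finset.sum_congr rfl fun x _ => hcount x
    _ = (v:ℝ) * ((k:ℝ) * s1 + ((v:ℝ) - 1 - k) * s2) := by
        rw [Finset.sum_const, Finset.card_univ, Fintype.card_fin, nsmul_eq_mul]
    _ = _ := by rw [hfin1, hfin2]

/-- The sum of distances of the spherical embedding of a strongly regular graph
with parameters `(v, k, a, c)` on an eigenspace `θ ≠ k` of its adjacency matrix: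
`Σₓ Σ_y ‖z_x − z_y‖ = v·(√(2k(k−θ)) + √(2(v−1−k)(v+θ−k)))`. -/
theorem srg_embedding_sum_dist (v k a c : ℕ) (hc : 1 ≤ c) (hk0 : 0 < k) (hkv : k < v - 1)
    (G : SimpleGraph (Fin v)) [DecidableRel G.Adj] (hG : G.IsSRGWith v k a c)
    (θ : ℝ) (hθk : θ ≠ (k : ℝ))
    (hθ : Module.End.HasEigenvalue (Matrix.toEuclideanLin (G.adjMatrix ℝ)) θ)
    (hnz : ∀ x : Fin v,
      ((Submodule.orthogonalProjection
          (Module.End.eigenspace (Matrix.toEuclideanLin (G.adjMatrix ℝ)) θ)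
          (EuclideanSpace.single x 1) : EuclideanSpace ℝ (Fin v))) ≠ 0)
    (z : Fin v → EuclideanSpace ℝ (Fin v))
    (hz : ∀ x : Fin v, z x =
      ‖((Submodule.orthogonalProjection
          (Module.End.eigenspace (Matrix.toEuclideanLin (G.adjMatrix ℝ)) θ)
          (EuclideanSpace.single x 1) : EuclideanSpace ℝ (Fin v)))‖⁻¹ •
        ((Submodule.orthogonalProjection
          (Module.End.eigenspace (Matrix.toEuclideanLin (G.adjMatrix ℝ)) θ)
          (EuclideanSpace.single x 1) : EuclideanSpace ℝ (Fin v)))) :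
    ∑ x, ∑ y, ‖z x - z y‖ =
      (v : ℝ) * (Real.sqrt (2 * k * ((k : ℝ) - θ))
        + Real.sqrt (2 * ((v : ℝ) - 1 - k) * ((v : ℝ) + θ - k))) :=
  srg_aux v k a c hc hk0 hkv G hG θ hθk hθ hnz z hz
end

section
/- Let n be a positive even integer and let B be a nonempty finite set of binary words in 𝔽₂^n. Let λ : ℕ → ℝ be defined by λ(0) = 0 and λ(2i−1) = λ(2i) = 2^{n−2i}·i·C(2i, i) for every integer i ≥ 1, where C(2i,i) is the central binomial coefficient. Then Σ_{x∈B} Σ_{y∈B} λ(d_H(x, y)) ≤ 2^{n−1}·√(n/π) · Σ_{x∈B} Σ_{y∈B} ‖x̃ − ỹ‖, where d_H is the Hamming distance. -/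
open Real Finset

lemma centralBinom_mul_fac (i : ℕ) :
    Nat.centralBinom i * (i.factorial * i.factorial) = (2 * i).factorial := by
  have h : i ≤ 2 * i := by omega
  have := Nat.choose_mul_factorial_mul_factorial h
  rw [show 2 * i - i = i from by omega] at this
  rw [Nat.centralBinom, ← this, mul_assoc]

/-- Wallis upper bound for the central binomial coefficient. -/
lemma centralBinom_sq_mul_le (i : ℕ) (hi : 1 ≤ i) :
    (Nat.centralBinom i : ℝ) ^ 2 * (Real.pi * i) ≤ 16 ^ i := by
  have hfac : ((2 * i).factorial : ℝ) = (Nat.centralBinom i : ℝ) * (i.factorial : ℝ) ^ 2 := by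
    have := centralBinom_mul_fac i
    push_cast [← this]; ring
  have hC : (0 : ℝ) < (Nat.centralBinom i : ℝ) := by
    exact_mod_cast Nat.centralBinom_pos i
  have hF : (0 : ℝ) < (i.factorial : ℝ) := by positivity
  have hWr := Real.Wallis.W_eq_factorial_ratio i
  have h16 : (2 : ℝ) ^ (4 * i) = 16 ^ i := by
    rw [pow_mul]; norm_num
  have hden : ((Nat.centralBinom i : ℝ) * (i.factorial : ℝ) ^ 2) ^ 2 * (2 * i + 1) ≠ 0 := by
    positivity
  have hkey : Real.Wallis.W i * ((Nat.centralBinom i : ℝ) ^ 2 * (2 * i + 1)) = 16 ^ i := by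
    rw [hWr, hfac, div_mul_eq_mul_div, div_eq_iff hden, ← h16]; ring
  have hle := Real.Wallis.le_W i
  have hpos : (0 : ℝ) < (Nat.centralBinom i : ℝ) ^ 2 * (2 * i + 1) := by positivity
  have h2 : ((2 : ℝ) * i + 1) / (2 * i + 2) * (Real.pi / 2) *
      ((Nat.centralBinom i : ℝ) ^ 2 * (2 * i + 1)) ≤ 16 ^ i := by
    rw [← hkey]
    exact mul_le_mul_of_nonneg_right hle hpos.le
  have hd : (0 : ℝ) < 2 * i + 2 := by positivity
  rw [div_mul_eq_mul_div, div_mul_eq_mul_div, div_le_iff₀ hd] at h2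
  have hi' : (1 : ℝ) ≤ i := by exact_mod_cast hi
  nlinarith [Real.pi_pos, mul_pos Real.pi_pos (mul_pos hC hC)]

/-- The spherical embedding of a binary word `x ∈ 𝔽₂ⁿ`: the unit vector with
coordinates `x̃ⱼ = (−1)^{xⱼ}/√n`. -/
noncomputable def binEmbed {n : ℕ} (x : Fin n → ZMod 2) : EuclideanSpace ℝ (Fin n) :=
  WithLp.toLp 2 (fun j => (-1 : ℝ) ^ ((x j).val) / Real.sqrt n)

lemma norm_binEmbed_sub {n : ℕ} (hn : 0 < n) (x y : Fin n → ZMod 2) :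
    ‖binEmbed x - binEmbed y‖ =
      2 * Real.sqrt (hammingDist x y) / Real.sqrt n := by
  have hnp : (0 : ℝ) < n := by exact_mod_cast hn
  have hc : ∀ a b : ZMod 2,
      ((-1 : ℝ) ^ a.val - (-1 : ℝ) ^ b.val) ^ 2 = if a = b then 0 else 4 := by
    intro a b
    have h01 : ∀ c : ZMod 2, c = 0 ∨ c = 1 := by decide
    rcases h01 a with rfl | rfl <;> rcases h01 b with rfl | rfl <;> norm_num [ZMod.val_one]
  have hcoord : ∀ j, ‖(binEmbed x - binEmbed y) j‖ ^ 2
      = if x j = y j then (0:ℝ) else (4:ℝ) / (n:ℝ) := by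
    intro j
    have h1 : (binEmbed x - binEmbed y) j
        = ((-1 : ℝ) ^ ((x j).val) - (-1 : ℝ) ^ ((y j).val)) / Real.sqrt n := by
      simp [binEmbed, div_sub_div_same]
    rw [h1, Real.norm_eq_abs, sq_abs, div_pow, Real.sq_sqrt hnp.le, hc]
    split <;> simp
  rw [EuclideanSpace.norm_eq]
  simp_rw [hcoord]
  have hsum : ∑ j, (if x j = y j then (0:ℝ) else 4 / n)
      = (hammingDist x y : ℝ) * (4 / n) := by
    rw [Finset.sum_ite, Finset.sum_const_zero, Finset.sum_const, zero_add, nsmul_eq_mul,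
      hammingDist]
  rw [hsum]
  have h4 : (hammingDist x y : ℝ) * (4 / n)
      = (2 * Real.sqrt (hammingDist x y) / Real.sqrt n) ^ 2 := by
    rw [div_pow, mul_pow, Real.sq_sqrt (by positivity), Real.sq_sqrt hnp.le]
    ring
  rw [h4, Real.sqrt_sq (by positivity)]

lemma lam_le_aux (n : ℕ) (lam : ℕ → ℝ) (hlam0 : lam 0 = 0)
    (hlam : ∀ i : ℕ, 1 ≤ i →
      lam (2 * i - 1) = (2 : ℝ) ^ ((n : ℤ) - 2 * i) * i * Nat.choose (2 * i) i ∧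
      lam (2 * i) = (2 : ℝ) ^ ((n : ℤ) - 2 * i) * i * Nat.choose (2 * i) i)
    (d : ℕ) :
    lam d ≤ (2 : ℝ) ^ n * Real.sqrt d / Real.sqrt Real.pi := by
  rcases Nat.eq_zero_or_pos d with rfl | hd
  · simp [hlam0]
  · set i := (d + 1) / 2 with hidef
    have hi1 : 1 ≤ i := by omega
    have hid : i ≤ d := by omega
    have hcase : d = 2 * i - 1 ∨ d = 2 * i := by omega
    obtain ⟨h1, h2⟩ := hlam i hi1
    have hlamd : lam d = (2 : ℝ) ^ ((n : ℤ) - 2 * i) * i * Nat.choose (2 * i) i := by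
      rcases hcase with h | h
      · rw [h, h1]
      · rw [h, h2]
    have hz : (2 : ℝ) ^ ((n : ℤ) - 2 * i) = 2 ^ n / 4 ^ i := by
      rw [show ((n : ℤ) - 2 * i) = (n : ℤ) - ((2 * i : ℕ) : ℤ) by push_cast; ring,
        zpow_sub₀ (by norm_num : (2:ℝ) ≠ 0), zpow_natCast, zpow_natCast, pow_mul]
      norm_num
    have hC := centralBinom_sq_mul_le i hi1
    have hCdef : (Nat.centralBinom i : ℝ) = (Nat.choose (2 * i) i : ℝ) := by
      rw [Nat.centralBinom]
    rw [hCdef] at hC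
    set C : ℝ := (Nat.choose (2 * i) i : ℝ) with hCd
    have hCpos : (0 : ℝ) ≤ C := by positivity
    have hkey : (i : ℝ) * C / 4 ^ i ≤ Real.sqrt d / Real.sqrt Real.pi := by
      rw [← Real.sqrt_div (Nat.cast_nonneg d) Real.pi,
        ← Real.sqrt_sq (by positivity : (0:ℝ) ≤ (i : ℝ) * C / 4 ^ i)]
      apply Real.sqrt_le_sqrt
      rw [div_pow, mul_pow, div_le_div_iff₀ (by positivity) Real.pi_pos]
      have h16 : ((4:ℝ) ^ i) ^ 2 = 16 ^ i := by
        rw [← pow_mul, mul_comm, pow_mul]; norm_num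
      rw [h16]
      have hid' : (i : ℝ) ≤ (d : ℝ) := by exact_mod_cast hid
      have hip : (0:ℝ) ≤ (i : ℝ) := by positivity
      nlinarith [mul_le_mul_of_nonneg_left hC hip,
        mul_le_mul_of_nonneg_right hid' (by positivity : (0:ℝ) ≤ (16:ℝ) ^ i)]
    calc lam d = (2 : ℝ) ^ n * ((i : ℝ) * C / 4 ^ i) := by rw [hlamd, hz]; ring
      _ ≤ (2 : ℝ) ^ n * (Real.sqrt d / Real.sqrt Real.pi) := by
          exact mul_le_mul_of_nonneg_left hkey (by positivity)
      _ = (2 : ℝ) ^ n * Real.sqrt d / Real.sqrt Real.pi := by ring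

/-- For a binary code `B ⊆ 𝔽₂ⁿ` (`n` even) and the potential `λ` with `λ(0) = 0`,
`λ(2i−1) = λ(2i) = 2^{n−2i}·i·C(2i,i)`, one has
`Σ Σ λ(d_H(x,y)) ≤ 2^{n−1}·√(n/π)·Σ Σ ‖x̃ − ỹ‖`. -/
theorem lambda_sum_le_sum_dist (n : ℕ) (hn : 0 < n) (hne : Even n)
    (B : Finset (Fin n → ZMod 2)) (hB : B.Nonempty)
    (lam : ℕ → ℝ) (hlam0 : lam 0 = 0)
    (hlam : ∀ i : ℕ, 1 ≤ i →
      lam (2 * i - 1) = (2 : ℝ) ^ ((n : ℤ) - 2 * i) * i * Nat.choose (2 * i) i ∧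
      lam (2 * i) = (2 : ℝ) ^ ((n : ℤ) - 2 * i) * i * Nat.choose (2 * i) i) :
    ∑ x ∈ B, ∑ y ∈ B, lam (hammingDist x y) ≤
      (2 : ℝ) ^ (n - 1) * Real.sqrt ((n : ℝ) / Real.pi) *
        ∑ x ∈ B, ∑ y ∈ B, ‖binEmbed x - binEmbed y‖ := by
  rw [Finset.mul_sum]
  refine Finset.sum_le_sum fun x _ => ?_
  rw [Finset.mul_sum]
  refine Finset.sum_le_sum fun y _ => ?_
  rw [norm_binEmbed_sub hn]
  set d := hammingDist x y
  have hnp : (0 : ℝ) < n := by exact_mod_cast hn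
  have hsn : (0 : ℝ) < Real.sqrt n := Real.sqrt_pos.mpr hnp
  have hsπ : (0 : ℝ) < Real.sqrt Real.pi := Real.sqrt_pos.mpr Real.pi_pos
  have h2n : (2 : ℝ) ^ (n - 1) * 2 = 2 ^ n := by
    rw [← pow_succ]; congr 1; omega
  have hrw : (2 : ℝ) ^ (n - 1) * Real.sqrt ((n : ℝ) / Real.pi) *
      (2 * Real.sqrt d / Real.sqrt n) = (2 : ℝ) ^ n * Real.sqrt d / Real.sqrt Real.pi := by
    rw [Real.sqrt_div hnp.le, ← h2n]
    field_simp
  rw [hrw]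
  exact lam_le_aux n lam hlam0 hlam d
end

section
/- For every integer i ≥ 1, the central binomial coefficient satisfies i·C(2i, i) ≤ √(i/π)·2^{2i}, i.e., i·(2i)!/(i!)² ≤ √(i/π)·4^i. -/
lemma key_central (i : ℕ) (hi : 1 ≤ i) :
    Real.pi * i * (Nat.choose (2 * i) i : ℝ) ^ 2 ≤ 16 ^ i := by
  have hW := Real.Wallis.le_W i
  rw [Real.Wallis.W_eq_factorial_ratio] at hW
  have hCnat := Nat.choose_mul_factorial_mul_factorial (Nat.le_mul_of_pos_left i two_pos)
  have h2 : 2 * i - i = i := by omega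
  rw [h2] at hCnat
  have hC : ((Nat.choose (2 * i) i : ℝ)) * (Nat.factorial i : ℝ) ^ 2
      = (Nat.factorial (2 * i) : ℝ) := by
    rw [sq, ← mul_assoc]; exact_mod_cast congrArg (Nat.cast (R := ℝ)) hCnat
  have hfac : (0 : ℝ) < (Nat.factorial i : ℝ) := by exact_mod_cast Nat.factorial_pos i
  have h16 : (2 : ℝ) ^ (4 * i) = 16 ^ i := by
    rw [pow_mul]; norm_num
  have hCpos : (0 : ℝ) < (Nat.choose (2 * i) i : ℝ) := by
    exact_mod_cast Nat.choose_pos (by omega : i ≤ 2 * i)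
  have hWC : (2:ℝ) ^ (4 * i) * (Nat.factorial i : ℝ) ^ 4 / ((Nat.factorial (2*i) : ℝ) ^ 2 * (2 * i + 1))
      = 16 ^ i / ((Nat.choose (2 * i) i : ℝ) ^ 2 * (2 * i + 1)) := by
    rw [← hC, h16]
    field_simp
  push_cast at hW
  rw [hWC] at hW
  have hipos : (0 : ℝ) < i := by exact_mod_cast hi
  have hd1 : (0:ℝ) < 2 * i + 2 := by positivity
  have hd2 : (0:ℝ) < (Nat.choose (2 * i) i : ℝ) ^ 2 * (2 * i + 1) := by positivity
  rw [div_mul_eq_mul_div, div_le_div_iff₀ hd1 hd2] at hW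
  nlinarith [hW, Real.pi_pos, sq_nonneg ((Nat.choose (2 * i) i : ℝ)),
    mul_pos (mul_pos Real.pi_pos hipos) (pow_pos hCpos 2)]

/-- For every integer `i ≥ 1`, `i·C(2i, i) ≤ √(i/π)·4^i`. -/
theorem central_binom_bound (i : ℕ) (hi : 1 ≤ i) :
    (i : ℝ) * Nat.choose (2 * i) i ≤ Real.sqrt ((i : ℝ) / Real.pi) * 4 ^ i := by
  have key := key_central i hi
  have hipos : (0 : ℝ) < i := by exact_mod_cast hi
  have h4 : ((4:ℝ) ^ i) = Real.sqrt (16 ^ i) := by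
    rw [show (16:ℝ)^i = ((4:ℝ)^i)^2 by rw [← pow_mul, mul_comm, pow_mul]; norm_num]
    rw [Real.sqrt_sq (by positivity)]
  rw [h4, ← Real.sqrt_mul (by positivity)]
  rw [Real.le_sqrt (by positivity) (by positivity)]
  rw [div_mul_eq_mul_div, le_div_iff₀ Real.pi_pos]
  nlinarith [mul_le_mul_of_nonneg_left key hipos.le]
end

section
/- There exists a constant C > 0 such that for every integer r ≥ 1 the following holds. Set n_r = 3·2^{2r−1} − 1, N_r = (4/9)(n_r + 1)² = 2^{4r}, s_r = 1/(2^r + 1), and T_r = N_r·( (N_r/2 − 1)(√(2 − 2 s_r) + √(2 + 2 s_r)) + 2 ). Then | T_r − √2·N_r² + N_r^{3/2}/(4√2) | ≤ C·N_r^{5/4}. (That is, the sum of distances of the spherical codes obtained from De Caen's equiangular line families satisfies T_r = √2·N_r² − N_r^{3/2}/(4√2) + O(N_r^{5/4}).) -/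
lemma sqrt_sum_bounds {s : ℝ} (h0 : 0 < s) (h1 : s ≤ 1/3) :
    2 - s^2/4 - s^3 ≤ Real.sqrt (1-s) + Real.sqrt (1+s) ∧
      Real.sqrt (1-s) + Real.sqrt (1+s) ≤ 2 - s^2/4 := by
  set u := Real.sqrt (1-s) with hu'
  set v := Real.sqrt (1+s) with hv'
  have hu0 : 0 ≤ u := Real.sqrt_nonneg _
  have hv0 : 0 ≤ v := Real.sqrt_nonneg _
  have hu : u^2 = 1 - s := Real.sq_sqrt (by linarith)
  have hv : v^2 = 1 + s := Real.sq_sqrt (by linarith)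
  have huv : (u*v)^2 = 1 - s^2 := by rw [mul_pow, hu, hv]; ring
  have huv0 : 0 ≤ u*v := mul_nonneg hu0 hv0
  have hub : u*v ≤ 1 - s^2/2 := by nlinarith [sq_nonneg (u*v - (1 - s^2/2))]
  have hlb : 1 - s^2/2 - s^4/2 ≤ u*v := by nlinarith [sq_nonneg (u*v + (1 - s^2/2 - s^4/2))]
  have hsum : (u+v)^2 = 2 + 2*(u*v) := by rw [add_sq, hu, hv]; ring
  have hBpos : 0 ≤ 2 - s^2/4 - s^3 := by nlinarith
  constructor
  · have hpoly : (2 - s^2/4 - s^3)^2 ≤ 4 - s^2 - s^4 := by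
      nlinarith [pow_pos h0 3, pow_pos h0 4, pow_pos h0 5, pow_pos h0 6, sq_nonneg s]
    have hB : (2 - s^2/4 - s^3)^2 ≤ (u+v)^2 := by rw [hsum]; linarith
    have := Real.sqrt_le_sqrt hB
    rwa [Real.sqrt_sq hBpos, Real.sqrt_sq (by linarith)] at this
  · have hB : (u+v)^2 ≤ (2 - s^2/4)^2 := by rw [hsum]; nlinarith [sq_nonneg (s^2)]
    have := Real.sqrt_le_sqrt hB
    rwa [Real.sqrt_sq (by linarith), Real.sqrt_sq (by nlinarith)] at this

set_option maxHeartbeats 1600000 in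
/-- Asymptotics of the sum of distances of the spherical codes obtained from De Caen's
equiangular line families: with `N_r = 2^{4r}`, `s_r = 1/(2^r+1)` and
`T_r = N_r·((N_r/2 − 1)(√(2−2s_r) + √(2+2s_r)) + 2)`, one has
`T_r = √2·N_r² − N_r^{3/2}/(4√2) + O(N_r^{5/4})`. -/
theorem deCaen_sum_dist_asymptotics :
    ∃ C : ℝ, 0 < C ∧ ∀ r : ℕ, 1 ≤ r →
      |(2 ^ (4 * r) : ℝ) *
          (((2 ^ (4 * r) : ℝ) / 2 - 1) *
              (Real.sqrt (2 - 2 * (1 / ((2 : ℝ) ^ r + 1)))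
                + Real.sqrt (2 + 2 * (1 / ((2 : ℝ) ^ r + 1)))) + 2)
        - Real.sqrt 2 * (2 ^ (4 * r) : ℝ) ^ 2
        + (2 ^ (4 * r) : ℝ) ^ ((3 : ℝ) / 2) / (4 * Real.sqrt 2)|
        ≤ C * (2 ^ (4 * r) : ℝ) ^ ((5 : ℝ) / 4) := by
  refine ⟨8, by norm_num, fun r hr => ?_⟩
  set q : ℝ := (2:ℝ) ^ r with hqdef
  have hq2 : (2:ℝ) ≤ q := by
    calc (2:ℝ) = 2^1 := (pow_one 2).symm
    _ ≤ q := pow_le_pow_right₀ (by norm_num) hr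
  have hq0 : (0:ℝ) < q := by linarith
  -- rewrite the nat power 2^(4r) as q^4
  have hN : ((2:ℝ) ^ (4 * r)) = q ^ 4 := by
    rw [hqdef, ← pow_mul, mul_comm]
  -- rpow computations
  have h32 : ((2:ℝ) ^ (4 * r) : ℝ) ^ ((3:ℝ)/2) = q ^ 6 := by
    rw [← Real.rpow_natCast (2:ℝ) (4 * r), ← Real.rpow_mul (by norm_num : (0:ℝ) ≤ 2)]
    rw [hqdef, ← pow_mul]
    rw [← Real.rpow_natCast (2:ℝ) (r * 6)]
    congr 1
    push_cast
    ring
  have h54 : ((2:ℝ) ^ (4 * r) : ℝ) ^ ((5:ℝ)/4) = q ^ 5 := by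
    rw [← Real.rpow_natCast (2:ℝ) (4 * r), ← Real.rpow_mul (by norm_num : (0:ℝ) ≤ 2)]
    rw [hqdef, ← pow_mul]
    rw [← Real.rpow_natCast (2:ℝ) (r * 5)]
    congr 1
    push_cast
    ring
  rw [h32, h54, hN]
  clear_value q
  set s : ℝ := 1 / (q + 1) with hsdef
  have hs0 : 0 < s := by rw [hsdef]; positivity
  have hs3 : s ≤ 1/3 := by
    rw [hsdef, div_le_div_iff₀ (by linarith) (by norm_num)]
    linarith
  have hqs : q * s = 1 - s := by
    rw [hsdef]
    field_simp
    ring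
  clear_value s
  -- sqrt 2 facts
  set c : ℝ := Real.sqrt 2 with hcdef
  have hc0 : 0 ≤ c := Real.sqrt_nonneg 2
  have hc2 : c ^ 2 = 2 := Real.sq_sqrt (by norm_num)
  have hc1 : 1 ≤ c := by nlinarith
  have hc32 : c ≤ 3/2 := by nlinarith
  clear_value c
  -- the sqrt sum
  have h2s : (2:ℝ) - 2 * s = 2 * (1 - s) := by ring
  have h2s' : (2:ℝ) + 2 * s = 2 * (1 + s) := by ring
  have hsplit : Real.sqrt (2 - 2 * s) + Real.sqrt (2 + 2 * s)
      = c * (Real.sqrt (1 - s) + Real.sqrt (1 + s)) := by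
    rw [hcdef, h2s, h2s', Real.sqrt_mul (by norm_num) (1 - s), Real.sqrt_mul (by norm_num) (1 + s)]
    ring
  obtain ⟨hglo, hghi⟩ := sqrt_sum_bounds hs0 hs3
  have hAlo : c * (2 - s^2/4 - s^3) ≤ Real.sqrt (2 - 2 * s) + Real.sqrt (2 + 2 * s) := by
    rw [hsplit]
    exact mul_le_mul_of_nonneg_left hglo hc0
  have hAhi : Real.sqrt (2 - 2 * s) + Real.sqrt (2 + 2 * s) ≤ c * (2 - s^2/4) := by
    rw [hsplit]
    exact mul_le_mul_of_nonneg_left hghi hc0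
  set A : ℝ := Real.sqrt (2 - 2 * s) + Real.sqrt (2 + 2 * s) with hAdef
  clear_value A
  have hcoef : (0:ℝ) ≤ q^4 * (q^4/2 - 1) := by
    nlinarith [pow_pos hq0 4, pow_le_pow_left₀ (by norm_num : (0:ℝ) ≤ 2) hq2 4]
  have hq4 : (16:ℝ) ≤ q^4 := by
    calc (16:ℝ) = 2^4 := by norm_num
    _ ≤ q^4 := pow_le_pow_left₀ (by norm_num) hq2 4
  have hq5pos : (0:ℝ) < q^5 := pow_pos hq0 5
  have hq45 : q^4 ≤ q^5 / 2 := by nlinarith [pow_pos hq0 4]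
  have hqs1 : q * s ≤ 1 := by rw [hqs]; linarith
  have hq6s : q^6 * s ≤ q^5 := by
    calc q^6 * s = q^5 * (q * s) := by ring
    _ ≤ q^5 * 1 := mul_le_mul_of_nonneg_left hqs1 hq5pos.le
    _ = q^5 := by ring
  have hq8s3 : q^8 * s^3 ≤ q^5 := by
    have h1 : (q * s)^3 ≤ 1 := pow_le_one₀ (by positivity) hqs1
    calc q^8 * s^3 = q^5 * (q * s)^3 := by ring
    _ ≤ q^5 * 1 := mul_le_mul_of_nonneg_left h1 hq5pos.le
    _ = q^5 := by ring
  have hkey : q^8 * s^2 - q^6 = q^6 * (s^2 - 2*s) := by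
    linear_combination (q^6 * (q*s + 1 - s)) * hqs
  have hc6 : q^6 / (4 * c) = c * q^6 / 8 := by
    have hc0' : (0:ℝ) < c := by linarith
    rw [div_eq_div_iff (by positivity) (by norm_num)]
    linear_combination (-4) * q^6 * hc2
  rw [hc6, abs_le]
  have hup : q^4 * (q^4/2 - 1) * A ≤ q^4 * (q^4/2 - 1) * (c * (2 - s^2/4)) :=
    mul_le_mul_of_nonneg_left hAhi hcoef
  have hdn : q^4 * (q^4/2 - 1) * (c * (2 - s^2/4 - s^3)) ≤ q^4 * (q^4/2 - 1) * A :=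
    mul_le_mul_of_nonneg_left hAlo hcoef
  have hkey' : c * (q^8 * s^2) - c * q^6 = - (c * (q^6 * (2*s - s^2))) := by
    linear_combination c * hkey
  have hss : 0 ≤ 2*s - s^2 := by linarith [mul_le_mul_of_nonneg_left hs3 hs0.le]
  have ht1 : 0 ≤ c * (q^6 * (2*s - s^2)) :=
    mul_nonneg hc0 (mul_nonneg (pow_pos hq0 6).le hss)
  have ht2 : c * (q^8 * s^3) ≤ (3/2) * q^5 := by
    calc c * (q^8 * s^3) ≤ (3/2) * (q^8 * s^3) :=
          mul_le_mul_of_nonneg_right hc32 (mul_nonneg (pow_pos hq0 8).le (pow_pos hs0 3).le)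
    _ ≤ (3/2) * q^5 := by linarith
  have ht3 : 0 ≤ c * (q^4 * s^2) := mul_nonneg hc0 (mul_nonneg (pow_pos hq0 4).le (sq_nonneg s))
  have ht4 : 0 ≤ c * (q^4 * s^3) := mul_nonneg hc0 (mul_nonneg (pow_pos hq0 4).le (pow_pos hs0 3).le)
  have ht5 : (2 - 2*c) * q^4 ≤ 0 :=
    mul_nonpos_of_nonpos_of_nonneg (by linarith) (pow_pos hq0 4).le
  have ht5' : -q^4 ≤ (2 - 2*c) * q^4 := by
    have := mul_le_mul_of_nonneg_right (by linarith : (-1:ℝ) ≤ 2 - 2*c) (pow_pos hq0 4).le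
    linarith
  have ht6 : q^4 ≤ q^5 := by linarith
  have hu1 : c * (q^6 * (2*s - s^2)) ≤ 3 * q^5 := by
    have h1 : q^6 * (2*s - s^2) ≤ 2 * q^5 := by
      linarith [hq6s, mul_nonneg (pow_pos hq0 6).le (sq_nonneg s)]
    calc c * (q^6 * (2*s - s^2)) ≤ (3/2) * (q^6 * (2*s - s^2)) :=
          mul_le_mul_of_nonneg_right hc32 (mul_nonneg (pow_pos hq0 6).le hss)
    _ ≤ (3/2) * (2 * q^5) := by linarith
    _ = 3 * q^5 := by ring
  have hu2 : c * (q^4 * s^2) ≤ q^5 := by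
    have hs2 : s^2 ≤ 1/9 := by nlinarith [mul_le_mul_of_nonneg_left hs3 hs0.le]
    have e1 : c * (q^4 * s^2) ≤ (3/2) * (q^4 * s^2) :=
      mul_le_mul_of_nonneg_right hc32 (mul_nonneg (pow_pos hq0 4).le (sq_nonneg s))
    have e2 : q^4 * s^2 ≤ q^4 * (1/9) := mul_le_mul_of_nonneg_left hs2 (pow_pos hq0 4).le
    linarith
  constructor
  · linarith [hdn, hkey', ht1, ht2, ht3, ht4, ht5', ht6, hq5pos]
  · linarith [hup, hkey', hu1, hu2, ht5, hq5pos]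
end
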